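/- arXiv:2112.05649 — 3 statements merged into one kernel-verified Lean document; each statement's English description precedes it below -/
import Mathlib

section
/- For every odd positive integer k and every nonnegative integer n, σ_k(8n+7) ≡ 0 (mod 8). -/
def sigma (k n : ℕ) : ℕ := ∑ d ∈ n.divisors, d ^ k

theorem sigma_eight_n_seven (k n : ℕ) (hk : 0 < k) (hodd : Odd k) :
    sigma k (8 * n + 7) % 8 = 0 := by
  set m := 8 * n + 7 with hm
  have hm0 : m ≠ 0 := by omega
  rw [← Nat.dvd_iff_mod_eq_zero, ← ZMod.natCast_eq_zero_iff _ 8]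
  unfold sigma
  push_cast
  have hm8 : (m : ZMod 8) = 7 := by rw [hm]; push_cast; rw [show (8:ZMod 8) = 0 by decide]; ring
  apply Finset.sum_involution (fun d _ => m / d)
  · intro d hd
    obtain ⟨hdvd, -⟩ := Nat.mem_divisors.mp hd
    have hmul : ((m / d : ℕ) : ZMod 8) * (d : ZMod 8) = 7 := by
      rw [← Nat.cast_mul, Nat.div_mul_cancel hdvd, hm8]
    have key : ∀ a b : ZMod 8, a * b = 7 → b = -a := by decide
    rw [key _ _ hmul, hodd.neg_pow]
    ring
  · intro d hd _
    obtain ⟨hdvd, -⟩ := Nat.mem_divisors.mp hd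
    intro heq
    have : ((d : ZMod 8)) * d = 7 := by
      rw [← hm8, ← Nat.cast_mul]
      have h2 := Nat.div_mul_cancel hdvd
      rw [heq] at h2
      exact_mod_cast congrArg (Nat.cast : ℕ → ZMod 8) h2
    revert this
    have : ∀ a : ZMod 8, a * a ≠ 7 := by decide
    exact this _
  · intro d hd
    obtain ⟨hdvd, -⟩ := Nat.mem_divisors.mp hd
    exact Nat.mem_divisors.mpr ⟨⟨d, (Nat.div_mul_cancel hdvd).symm⟩, hm0⟩
  · intro d hd
    obtain ⟨hdvd, -⟩ := Nat.mem_divisors.mp hd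
    exact Nat.div_div_self hdvd hm0
end

section
/- If k is a positive integer with k ≡ 3 (mod 6), then for every nonnegative integer n and every b ∈ {3, 5, 6}, σ_k(7n+b) ≡ 0 (mod 7). -/
lemma cube_add_cube (x y : ZMod 7) (h : x * y = 3 ∨ x * y = 5 ∨ x * y = 6) :
    x ^ 3 + y ^ 3 = 0 := by revert h; revert y; revert x; decide

lemma no_sqrt (x : ZMod 7) : x ^ 2 ≠ 3 ∧ x ^ 2 ≠ 5 ∧ x ^ 2 ≠ 6 := by revert x; decide

lemma pow_six (x : ZMod 7) (hx : x ≠ 0) : x ^ 6 = 1 := by revert hx; revert x; decide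

theorem sigma_seven_n (k : ℕ) (hk : 0 < k) (hk3 : k % 6 = 3) :
    ∀ n : ℕ, ∀ b ∈ ({3, 5, 6} : Finset ℕ), sigma k (7 * n + b) % 7 = 0 := by
  intro n b hb
  simp only [Finset.mem_insert, Finset.mem_singleton] at hb
  set m := 7 * n + b with hmdef
  have hmmod : m % 7 = b := by rcases hb with rfl | rfl | rfl <;> omega
  have hm0 : m ≠ 0 := by rcases hb with rfl | rfl | rfl <;> omega
  have h7m : ¬ (7 ∣ m) := by
    intro h
    rcases hb with rfl | rfl | rfl <;> omega
  have hmcast : ((m : ℕ) : ZMod 7) = 3 ∨ ((m : ℕ) : ZMod 7) = 5 ∨ ((m : ℕ) : ZMod 7) = 6 := by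
    have : ((m : ℕ) : ZMod 7) = ((b : ℕ) : ZMod 7) := by
      rw [hmdef]; push_cast; ring_nf
      simp [show (7 : ZMod 7) = 0 by decide]
    rcases hb with rfl | rfl | rfl <;> simp [this]
  -- key: each divisor cast is nonzero, and d^k = d^3 in ZMod 7
  have hkey : ∀ d, d ∣ m → ((d : ℕ) : ZMod 7) ^ k = ((d : ℕ) : ZMod 7) ^ 3 := by
    intro d hd
    have hd0 : ((d : ℕ) : ZMod 7) ≠ 0 := by
      rw [Ne, ZMod.natCast_eq_zero_iff]
      exact fun h => h7m (h.trans hd)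
    have hkeq : k = 6 * (k / 6) + 3 := by omega
    rw [hkeq, pow_add, pow_mul, pow_six _ hd0, one_pow, one_mul]
  suffices hz : ((sigma k m : ℕ) : ZMod 7) = 0 by
    rwa [ZMod.natCast_eq_zero_iff, Nat.dvd_iff_mod_eq_zero] at hz
  rw [sigma, Nat.cast_sum]
  refine Finset.sum_involution (fun d _ => m / d) ?_ ?_ ?_ ?_
  · intro d hd
    have hdvd : d ∣ m := (Nat.mem_divisors.mp hd).1
    have hxy : ((d : ℕ) : ZMod 7) * (((m / d : ℕ) : ℕ) : ZMod 7) = ((m : ℕ) : ZMod 7) := by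
      rw [← Nat.cast_mul, Nat.mul_div_cancel' hdvd]
    push_cast
    rw [hkey d hdvd, hkey (m / d) (Nat.div_dvd_of_dvd hdvd)]
    push_cast at hxy ⊢
    exact cube_add_cube _ _ (by rw [hxy]; exact hmcast)
  · intro d hd _
    have hdvd : d ∣ m := (Nat.mem_divisors.mp hd).1
    intro heq
    replace heq : m / d = d := heq
    have hm : m = d * d := by
      conv_lhs => rw [← Nat.mul_div_cancel' hdvd, heq]
    have : ((d : ℕ) : ZMod 7) ^ 2 = ((m : ℕ) : ZMod 7) := by
      rw [hm]; push_cast; ring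
    rcases hmcast with h | h | h <;> rw [h] at this <;>
      exact absurd this (by have := no_sqrt ((d : ℕ) : ZMod 7); tauto)
  · intro d hd
    exact Nat.mem_divisors.mpr ⟨Nat.div_dvd_of_dvd (Nat.mem_divisors.mp hd).1, hm0⟩
  · intro d hd
    exact Nat.div_div_self (Nat.mem_divisors.mp hd).1 hm0
end

section
/- Suppose σ₀(An + B) ≡ 0 (mod 2^k) for all nonnegative integers n, where A, B, k are positive integers. Then there exist primes p₁ ≤ p₂ ≤ ⋯ ≤ p_{k-1} such that (p₁p₂⋯p_{k-1})² divides A and p₁p₂⋯p_{k-1} divides B. -/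
open Finset

private lemma merca_two_mul_le_two_pow : ∀ t : ℕ, 2 * t ≤ 2 ^ t
  | 0 => by norm_num
  | 1 => by norm_num
  | (t + 2) => by
      have ih := merca_two_mul_le_two_pow (t + 1)
      have h2 : (2 : ℕ) ≤ 2 ^ (t + 1) := by
        calc (2:ℕ) = 2 ^ 1 := by norm_num
        _ ≤ 2 ^ (t + 1) := Nat.pow_le_pow_right (by norm_num) (by omega)
      calc 2 * (t + 2) = 2 * (t + 1) + 2 := by ring
      _ ≤ 2 ^ (t + 1) + 2 ^ (t + 1) := Nat.add_le_add ih h2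
      _ = 2 ^ (t + 2) := by ring

private lemma merca_exists_le_sum {α : Type*} [DecidableEq α] (s : Finset α) (t : α → ℕ) :
    ∀ n : ℕ, n ≤ ∑ q ∈ s, t q →
      ∃ m : α → ℕ, (∀ q ∈ s, m q ≤ t q) ∧ ∑ q ∈ s, m q = n := by
  induction s using Finset.induction_on with
  | empty =>
      intro n hn
      simp only [Finset.sum_empty, Nat.le_zero] at hn
      exact ⟨fun _ => 0, by simp, by simp [hn]⟩
  | @insert a s ha ih =>
      intro n hn
      rw [Finset.sum_insert ha] at hn
      obtain ⟨m, hm, hsum⟩ := ih (n - min n (t a)) (by omega)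
      refine ⟨Function.update m a (min n (t a)), ?_, ?_⟩
      · intro q hq
        rcases Finset.mem_insert.mp hq with rfl | hq'
        · rw [Function.update_self]; omega
        · have hqa' : q ≠ a := fun hqa => ha (hqa ▸ hq')
          rw [Function.update_of_ne hqa']
          exact hm q hq'
      · have hrest : ∑ q ∈ s, Function.update m a (min n (t a)) q = ∑ q ∈ s, m q :=
          Finset.sum_congr rfl fun q hq =>
            Function.update_of_ne (fun hqa : q = a => ha (hqa ▸ hq)) _ _
        rw [Finset.sum_insert ha, Function.update_self, hrest, hsum]
        omega

private lemma merca_prod_pow_dvd {F : Finset ℕ} {g : ℕ → ℕ} {N : ℕ}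
    (hprime : ∀ q ∈ F, q.Prime) (hdvd : ∀ q ∈ F, q ^ g q ∣ N) :
    (∏ q ∈ F, q ^ g q) ∣ N := by
  induction F using Finset.induction_on with
  | empty => simp
  | @insert q F hq ih =>
      rw [Finset.prod_insert hq]
      refine Nat.Coprime.mul_dvd_of_dvd_of_dvd ?_
        (hdvd q (Finset.mem_insert_self q F))
        (ih (fun q' hq' => hprime q' (Finset.mem_insert_of_mem hq'))
            (fun q' hq' => hdvd q' (Finset.mem_insert_of_mem hq')))
      refine Nat.Coprime.pow_left _ (Nat.Coprime.prod_right fun q' hq' => ?_)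
      refine Nat.Coprime.pow_right _ ?_
      exact (Nat.coprime_primes (hprime q (Finset.mem_insert_self q F))
        (hprime q' (Finset.mem_insert_of_mem hq'))).mpr
        (by rintro rfl; exact hq hq')

private lemma merca_card_sum {α β : Type*} (s : Finset α) (f : α → Multiset β) :
    Multiset.card (∑ q ∈ s, f q) = ∑ q ∈ s, Multiset.card (f q) := by
  induction s using Finset.cons_induction with
  | empty => simp
  | cons a s h ih => rw [Finset.sum_cons, Finset.sum_cons, Multiset.card_add, ih]

theorem merca_conjecture (A B k : ℕ) (hA : 0 < A) (hB : 0 < B) (hk : 0 < k)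
    (h : ∀ n : ℕ, (A * n + B).divisors.card % 2 ^ k = 0) :
    ∃ p : Fin (k - 1) → ℕ, (∀ i, (p i).Prime) ∧ Monotone p ∧
      (∏ i, p i) ^ 2 ∣ A ∧ (∏ i, p i) ∣ B := by
  classical
  -- set up d, a, b
  obtain ⟨d, a, b, hd, ha, hb, hA', hB', hab⟩ :
      ∃ d a b : ℕ, 0 < d ∧ 0 < a ∧ 0 < b ∧ A = d * a ∧ B = d * b ∧ Nat.Coprime a b := by
    have hg : 0 < Nat.gcd A B := Nat.gcd_pos_of_pos_left _ hA
    refine ⟨Nat.gcd A B, A / Nat.gcd A B, B / Nat.gcd A B, hg, ?_, ?_, ?_, ?_, ?_⟩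
    · exact Nat.div_pos (Nat.le_of_dvd hA (Nat.gcd_dvd_left A B)) hg
    · exact Nat.div_pos (Nat.le_of_dvd hB (Nat.gcd_dvd_right A B)) hg
    · exact (Nat.mul_div_cancel' (Nat.gcd_dvd_left A B)).symm
    · exact (Nat.mul_div_cancel' (Nat.gcd_dvd_right A B)).symm
    · exact Nat.coprime_div_gcd_div_gcd hg
  set P := d.primeFactors with hP
  set F := P.filter (fun q => q ∣ a) with hF
  set Q := P.filter (fun q => ¬ q ∣ a) with hQdef
  set e : ℕ → ℕ := fun q => d.factorization q with he
  set v := ∏ q ∈ Q, q ^ (e q % 2) with hv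
  have hPprime : ∀ q ∈ P, q.Prime := fun q hq => Nat.prime_of_mem_primeFactors hq
  have hQsub : Q ⊆ P := Finset.filter_subset _ _
  have hFsub : F ⊆ P := Finset.filter_subset _ _
  have hv0 : v ≠ 0 := by
    refine Finset.prod_ne_zero_iff.mpr fun q hq => ?_
    exact pow_ne_zero _ (hPprime q (hQsub hq)).pos.ne'
  have hva : Nat.Coprime v a := by
    refine Nat.Coprime.prod_left fun q hq => Nat.Coprime.pow_left _ ?_
    have hq' := Finset.mem_filter.mp hq
    exact (Nat.Prime.coprime_iff_not_dvd (hPprime q (hQsub hq))).mpr hq'.2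
  -- factorization of v
  have hvfact : v.factorization = ∑ q ∈ Q, Finsupp.single q (e q % 2) := by
    rw [hv, Nat.factorization_prod
      (fun q hq => pow_ne_zero _ (hPprime q (hQsub hq)).pos.ne')]
    exact Finset.sum_congr rfl fun q hq =>
      Nat.Prime.factorization_pow (hPprime q (hQsub hq))
  have hvq : ∀ q ∈ Q, v.factorization q = e q % 2 := by
    intro q hq
    rw [hvfact, Finset.sum_apply']
    rw [Finset.sum_eq_single_of_mem q hq]
    · exact Finsupp.single_eq_same
    · intro q' hq' hne
      exact Finsupp.single_eq_of_ne' hne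
  have hvnq : ∀ q, q ∉ Q → v.factorization q = 0 := by
    intro q hq
    rw [hvfact, Finset.sum_apply']
    refine Finset.sum_eq_zero fun q' hq' => ?_
    exact Finsupp.single_eq_of_ne (by rintro rfl; exact hq hq')
  -- Dirichlet
  haveI : NeZero a := ⟨ha.ne'⟩
  have hbu : IsUnit ((b : ℕ) : ZMod a) := (ZMod.isUnit_iff_coprime b a).mpr hab.symm
  have hvu : IsUnit ((v : ℕ) : ZMod a) := (ZMod.isUnit_iff_coprime v a).mpr hva
  obtain ⟨p, hp_gt, hp_prime, hp_mod⟩ :=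
    Nat.forall_exists_prime_gt_and_eq_mod
      (a := ((hvu.unit⁻¹ * hbu.unit : (ZMod a)ˣ) : ZMod a)) (Units.isUnit _) (b + d * v)
  have hp_pos : 0 < p := hp_prime.pos
  -- the chosen n
  have hmod : (((v * p : ℕ)) : ZMod a) = ((b : ℕ) : ZMod a) := by
    push_cast
    rw [hp_mod]
    push_cast
    rw [← mul_assoc, hvu.mul_val_inv, one_mul, hbu.unit_spec]
  have hble : b ≤ v * p := by
    have : p ≤ v * p := Nat.le_mul_of_pos_left p (Nat.pos_of_ne_zero hv0)
    omega
  have hdvd : a ∣ v * p - b :=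
    (Nat.modEq_iff_dvd' hble).mp ((ZMod.natCast_eq_natCast_iff _ _ _).mp hmod).symm
  set n := (v * p - b) / a with hn
  have hkey : A * n + B = d * v * p := by
    have han : a * n = v * p - b := Nat.mul_div_cancel' hdvd
    rw [hA', hB', mul_assoc, han, ← Nat.mul_add, Nat.sub_add_cancel hble, ← mul_assoc]
  -- sigma computation
  have hdv0 : d * v ≠ 0 := Nat.mul_ne_zero hd.ne' hv0
  have h2k : 2 ^ k ∣ (d * v * p).divisors.card := by
    rw [← hkey]
    exact Nat.dvd_of_mod_eq_zero (h n)
  have hpndvd : ¬ p ∣ d * v := by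
    intro hdvd'
    have := Nat.le_of_dvd (Nat.pos_of_ne_zero hdv0) hdvd'
    omega
  have hcop : Nat.Coprime (d * v) p :=
    ((Nat.Prime.coprime_iff_not_dvd hp_prime).mpr hpndvd).symm
  have hcard : (d * v * p).divisors.card = (d * v).divisors.card * 2 := by
    rw [hcop.card_divisors_mul, hp_prime.divisors,
      Finset.card_pair hp_prime.one_lt.ne]
  have h2k1 : 2 ^ (k - 1) ∣ (d * v).divisors.card := by
    rw [hcard] at h2k
    have hkk : k = (k - 1) + 1 := by omega
    rw [hkk, pow_succ] at h2k
    exact (Nat.mul_dvd_mul_iff_right (by norm_num : 0 < 2)).mp h2k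
  -- compute (d*v).divisors.card
  have hPF : (d * v).primeFactors = P := by
    rw [Nat.primeFactors_mul hd.ne' hv0]
    have hsub : v.primeFactors ⊆ Q := by
      intro q hq
      have hqp : q.Prime := Nat.prime_of_mem_primeFactors hq
      have hqv : q ∣ v := Nat.dvd_of_mem_primeFactors hq
      rw [hv] at hqv
      obtain ⟨q', hq', hqq'⟩ := (Prime.dvd_finset_prod_iff hqp.prime _).mp hqv
      have : q = q' := (Nat.prime_dvd_prime_iff_eq hqp
        (hPprime q' (hQsub hq'))).mp (hqp.dvd_of_dvd_pow hqq')
      rwa [this]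
    exact Finset.union_eq_left.mpr (hsub.trans hQsub)
  have hfdv : ∀ q, (d * v).factorization q = e q + v.factorization q := by
    intro q
    rw [Nat.factorization_mul hd.ne' hv0, Finsupp.add_apply]
  have hSval : (d * v).divisors.card =
      (∏ q ∈ F, (e q + 1)) * ∏ q ∈ Q, (e q + e q % 2 + 1) := by
    rw [Nat.card_divisors hdv0, hPF,
      ← Finset.prod_filter_mul_prod_filter_not P (fun q => q ∣ a)]
    congr 1
    · refine Finset.prod_congr rfl fun q hq => ?_
      have hqQ : q ∉ Q := by
        intro hqQ
        exact (Finset.mem_filter.mp hqQ).2 (Finset.mem_filter.mp hq).2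
      rw [hfdv, hvnq q hqQ]
    · refine Finset.prod_congr rfl fun q hq => ?_
      rw [hfdv, hvq q hq]
  have hodd : Odd (∏ q ∈ Q, (e q + e q % 2 + 1)) := by
    refine Finset.prod_induction _ Odd (fun _ _ => Odd.mul) odd_one fun q _ => ?_
    rw [Nat.odd_iff]
    omega
  have hFdvd : 2 ^ (k - 1) ∣ ∏ q ∈ F, (e q + 1) := by
    rw [hSval] at h2k1
    refine Nat.Coprime.dvd_of_dvd_mul_right ?_ h2k1
    refine Nat.Coprime.pow_left _ ?_
    rw [Nat.Prime.coprime_iff_not_dvd Nat.prime_two]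
    rw [Nat.odd_iff] at hodd
    omega
  -- extract multiplicities
  set t : ℕ → ℕ := fun q => (e q + 1).factorization 2 with ht
  have hsum_t : k - 1 ≤ ∑ q ∈ F, t q := by
    have hprod0 : (∏ q ∈ F, (e q + 1)) ≠ 0 :=
      Finset.prod_ne_zero_iff.mpr fun q _ => Nat.succ_ne_zero _
    have h1 : (∏ q ∈ F, (e q + 1)).factorization 2 = ∑ q ∈ F, t q := by
      rw [Nat.factorization_prod (fun q _ => Nat.succ_ne_zero _), Finset.sum_apply']
    rw [← h1]
    exact (Nat.Prime.pow_dvd_iff_le_factorization Nat.prime_two hprod0).mp hFdvd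
  obtain ⟨m, hm_le, hm_sum⟩ := merca_exists_le_sum F t (k - 1) hsum_t
  -- divisibility facts for each q in F
  have hq_facts : ∀ q ∈ F, q ^ (2 * m q) ∣ A ∧ q ^ (m q) ∣ B := by
    intro q hq
    have hqP : q ∈ P := hFsub hq
    have hqp : q.Prime := hPprime q hqP
    have hqa : q ∣ a := (Finset.mem_filter.mp hq).2
    have ht2 : 2 ^ t q ∣ e q + 1 := Nat.ordProj_dvd _ _
    have hle2 : 2 ^ t q ≤ e q + 1 := Nat.le_of_dvd (Nat.succ_pos _) ht2
    have h2t : 2 * t q ≤ 2 ^ t q := merca_two_mul_le_two_pow _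
    have h2m : 2 * m q ≤ e q + 1 := by
      have := hm_le q hq
      omega
    have hm_e : m q ≤ e q := by
      have := hm_le q hq
      omega
    have hqed : q ^ e q ∣ d := Nat.ordProj_dvd d q
    constructor
    · calc q ^ (2 * m q) ∣ q ^ (e q + 1) := pow_dvd_pow _ h2m
        _ ∣ d * a := by
          rw [pow_succ]
          exact mul_dvd_mul hqed hqa
        _ = A := hA'.symm
    · calc q ^ m q ∣ q ^ e q := pow_dvd_pow _ hm_e
        _ ∣ d := hqed
        _ ∣ B := ⟨b, hB'⟩
  -- build the multiset and sorted list
  set M : Multiset ℕ := ∑ q ∈ F, Multiset.replicate (m q) q with hM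
  have hMcard : Multiset.card M = k - 1 := by
    rw [hM, merca_card_sum]
    simpa using hm_sum
  have hMprod : M.prod = ∏ q ∈ F, q ^ m q := by
    rw [hM, Multiset.prod_sum]
    exact Finset.prod_congr rfl fun q _ => Multiset.prod_replicate _ _
  have hMmem : ∀ x ∈ M, x ∈ F := by
    intro x hx
    rw [hM] at hx
    obtain ⟨q, hq, hx⟩ := Multiset.mem_sum.mp hx
    rwa [Multiset.eq_of_mem_replicate hx]
  set l := M.sort (· ≤ ·) with hl
  have hlen : l.length = k - 1 := by rw [hl, Multiset.length_sort, hMcard]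
  have hlsort : l.Pairwise (· ≤ ·) := Multiset.pairwise_sort _ _
  have hprodl : (∏ i : Fin (k - 1), l.get (Fin.cast hlen.symm i)) = ∏ q ∈ F, q ^ m q := by
    have h1 : (∏ i : Fin (k - 1), l.get (Fin.cast hlen.symm i))
        = ∏ j : Fin l.length, l.get j :=
      Fintype.prod_equiv (finCongr hlen.symm) _ _ (fun i => rfl)
    rw [h1, ← List.prod_ofFn (f := l.get), List.ofFn_get, ← Multiset.prod_coe,
      hl, Multiset.sort_eq, hMprod]
  refine ⟨fun i => l.get (Fin.cast hlen.symm i), ?_, ?_, ?_, ?_⟩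
  · intro i
    have hmem : l.get (Fin.cast hlen.symm i) ∈ M :=
      (Multiset.mem_sort _).mp (List.get_mem l _)
    exact hPprime _ (hFsub (hMmem _ hmem))
  · intro i j hij
    exact hlsort.rel_get_of_le (by simpa using hij)
  · rw [hprodl, ← Finset.prod_pow]
    have : (∏ q ∈ F, (q ^ m q) ^ 2) = ∏ q ∈ F, q ^ (2 * m q) :=
      Finset.prod_congr rfl fun q _ => (pow_mul' q 2 (m q)).symm
    rw [this]
    exact merca_prod_pow_dvd (fun q hq => hPprime q (hFsub hq))
      (fun q hq => (hq_facts q hq).1)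
  · rw [hprodl]
    exact merca_prod_pow_dvd (fun q hq => hPprime q (hFsub hq))
      (fun q hq => (hq_facts q hq).2)
end
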